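/- The expectation values E[Y − Ỹ] and E[Z − Z̃] are both bounded above by (2/p²)(1 − p²)^(N/4) and bounded below by 0. -/

import Mathlib

open MeasureTheory Filter

/-- The Bernoulli(p) measure on `Bool`: `true` has probability `p`. -/
noncomputable def bern (p : ℝ) : Measure Bool :=
  ENNReal.ofReal p • Measure.dirac true + ENNReal.ofReal (1 - p) • Measure.dirac false

/-- The law of a random subset of `{0, …, N}` where each element is included
independently with probability `p`, encoded by indicator functions. -/
noncomputable def prodBern (p : ℝ) (N : ℕ) : Measure (Fin (N + 1) → Bool) :=
  Measure.pi fun _ => bern p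

/-- `n` belongs to the sumset `A + A`, where `A ⊆ {0,…,N}` is encoded by `ω`. -/
def inSumset {N : ℕ} (ω : Fin (N + 1) → Bool) (n : ℕ) : Prop :=
  ∃ a b : Fin (N + 1), ω a = true ∧ ω b = true ∧ (a : ℕ) + (b : ℕ) = n

/-- `Y`: the number of integers in `{0,…,N}` missing from `A + A`. -/
noncomputable def Ycount (N : ℕ) (ω : Fin (N + 1) → Bool) : ℕ :=
  {n : ℕ | n ≤ N ∧ ¬ inSumset ω n}.ncard

/-- `Z`: the number of integers in `{N+1,…,2N}` missing from `A + A`. -/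
noncomputable def Zcount (N : ℕ) (ω : Fin (N + 1) → Bool) : ℕ :=
  {n : ℕ | N + 1 ≤ n ∧ n ≤ 2 * N ∧ ¬ inSumset ω n}.ncard

/-- `W`: the number of integers in `{0,…,2N}` missing from `A + A`. -/
noncomputable def Wcount (N : ℕ) (ω : Fin (N + 1) → Bool) : ℕ :=
  {n : ℕ | n ≤ 2 * N ∧ ¬ inSumset ω n}.ncard

/-- `Ỹ`: the number of integers in `{0,…,⌊N/2⌋}` missing from `A + A`. -/
noncomputable def Ytilde (N : ℕ) (ω : Fin (N + 1) → Bool) : ℕ :=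
  {n : ℕ | n ≤ N / 2 ∧ ¬ inSumset ω n}.ncard

/-- `Z̃`: the number of integers in `{⌊3N/2⌋+1,…,2N}` missing from `A + A`. -/
noncomputable def Ztilde (N : ℕ) (ω : Fin (N + 1) → Bool) : ℕ :=
  {n : ℕ | 3 * N / 2 + 1 ≤ n ∧ n ≤ 2 * N ∧ ¬ inSumset ω n}.ncard

/-- A string of `k` bits has no two consecutive ones. -/
def noTwoOnes {k : ℕ} (x : Fin k → Bool) : Prop :=
  ∀ i : ℕ, ∀ hi : i + 1 < k, ¬(x ⟨i, Nat.lt_of_succ_lt hi⟩ = true ∧ x ⟨i + 1, hi⟩ = true)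

/-- `a_k`: the probability that `k` i.i.d. Bernoulli(p) bits contain no two
consecutive 1's (with `a_0 = 1`). -/
noncomputable def aseq (p : ℝ) (k : ℕ) : ℝ :=
  ((Measure.pi fun _ : Fin k => bern p) {x | noTwoOnes x}).toReal

lemma bern_singleton (p : ℝ) (b : Bool) :
    bern p {b} = if b then ENNReal.ofReal p else ENNReal.ofReal (1 - p) := by
  cases b <;> simp [bern, Measure.dirac_apply' _ (by trivial : MeasurableSet ({_} : Set Bool))]

lemma bern_total (p : ℝ) (hp0 : 0 ≤ p) (hp1 : p ≤ 1) :
    bern p {true} + bern p {false} = 1 := by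
  rw [bern_singleton, bern_singleton]
  simp only [if_true, if_false, Bool.false_eq_true]
  rw [← ENNReal.ofReal_add hp0 (by linarith)]
  norm_num

lemma bern_isProb (p : ℝ) (hp0 : 0 ≤ p) (hp1 : p ≤ 1) : IsProbabilityMeasure (bern p) := by
  constructor
  have : (Set.univ : Set Bool) = {true} ∪ {false} := by
    ext b; cases b <;> simp
  rw [this, measure_union (by simp) (by trivial), bern_total p hp0 hp1]

instance bern_finite (p : ℝ) : IsFiniteMeasure (bern p) := by
  constructor
  have : (Set.univ : Set Bool) = {true} ∪ {false} := by ext b; cases b <;> simp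
  rw [this, measure_union (by simp) (by trivial), bern_singleton, bern_singleton]
  simp only [if_true, if_false, Bool.false_eq_true]
  exact ENNReal.add_lt_top.2 ⟨ENNReal.ofReal_lt_top, ENNReal.ofReal_lt_top⟩

section PiMeas

variable {ι : Type*} [Fintype ι] [DecidableEq ι] {p : ℝ}

local notation "π" => (Measure.pi fun _ : ι => bern p)

lemma pi_singleton (ω : ι → Bool) : π {ω} = ∏ i, bern p {ω i} := by
  rw [← Set.univ_pi_singleton ω, Measure.pi_pi]

lemma pi_meas_eq_sum (S : Set (ι → Bool)) [DecidablePred (· ∈ S)] :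
    π S = ∑ ω ∈ Finset.univ.filter (· ∈ S), ∏ i, bern p {ω i} := by
  have h1 : S = ⋃ ω ∈ Finset.univ.filter (· ∈ S), {ω} := by
    ext ω; simp
  conv_lhs => rw [h1]
  rw [measure_biUnion_finset]
  · exact Finset.sum_congr rfl fun ω _ => pi_singleton ω
  · intro a _ b _ hab
    simp [Set.disjoint_singleton, hab]
  · intro b _; exact measurableSet_singleton b

end PiMeas

section Cond

variable {ι : Type*} [Fintype ι] [DecidableEq ι] {p : ℝ}

local notation "π" => (Measure.pi fun _ : ι => bern p)

lemma pi_split (a : ι) (S : Set (ι → Bool)) [DecidablePred (· ∈ S)] :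
    π S = ∑ x : Bool, bern p {x} *
      ∑ ω ∈ Finset.univ.filter (fun ω : ι → Bool => ω a = x ∧ ω ∈ S),
        ∏ i ∈ Finset.univ.erase a, bern p {ω i} := by
  classical
  rw [pi_meas_eq_sum]
  rw [← Finset.sum_fiberwise_of_maps_to
    (g := fun ω : ι → Bool => ω a) (t := Finset.univ) (fun x _ => Finset.mem_univ _)]
  refine Finset.sum_congr rfl fun x _ => ?_
  rw [Finset.mul_sum]
  rw [Finset.filter_filter]
  refine Finset.sum_congr (by
    refine Finset.filter_congr fun ω _ => ?_
    tauto) fun ω hω => ?_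
  simp only [Finset.mem_filter] at hω
  rw [← Finset.mul_prod_erase Finset.univ (fun i => bern p {ω i}) (Finset.mem_univ a), hω.2.1]

lemma pi_cond (hp0 : 0 ≤ p) (hp1 : p ≤ 1) (a : ι) (v : Bool) (S : Set (ι → Bool))
    (hS : ∀ ω x, Function.update ω a x ∈ S ↔ ω ∈ S) :
    π ({ω | ω a = v} ∩ S) = bern p {v} * π S := by
  classical
  set T : Bool → ENNReal := fun x =>
    ∑ ω ∈ Finset.univ.filter (fun ω : ι → Bool => ω a = x ∧ ω ∈ S),
      ∏ i ∈ Finset.univ.erase a, bern p {ω i} with hT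
  have hTeq : ∀ x y, T x = T y := by
    intro x y
    simp only [hT]
    refine Finset.sum_bij' (fun ω _ => Function.update ω a y)
      (fun ω _ => Function.update ω a x) ?_ ?_ ?_ ?_ ?_
    · intro ω hω
      simp only [Finset.mem_filter, Finset.mem_univ, true_and] at hω ⊢
      exact ⟨Function.update_self _ _ _, (hS ω y).2 hω.2⟩
    · intro ω hω
      simp only [Finset.mem_filter, Finset.mem_univ, true_and] at hω ⊢
      exact ⟨Function.update_self _ _ _, (hS ω x).2 hω.2⟩
    · intro ω hω
      simp only [Finset.mem_filter, Finset.mem_univ, true_and] at hω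
      rw [Function.update_idem, ← hω.1, Function.update_eq_self]
    · intro ω hω
      simp only [Finset.mem_filter, Finset.mem_univ, true_and] at hω
      rw [Function.update_idem, ← hω.1, Function.update_eq_self]
    · intro ω hω
      refine Finset.prod_congr rfl fun i hi => ?_
      rw [Function.update_of_ne (Finset.ne_of_mem_erase hi)]
  have key1 : π S = T v := by
    rw [pi_split a S, Fintype.sum_bool]
    show bern p {true} * T true + bern p {false} * T false = T v
    rw [hTeq true v, hTeq false v, ← add_mul, bern_total p hp0 hp1, one_mul]
  have hinner : ∀ x : Bool, Finset.univ.filter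
      (fun ω : ι → Bool => ω a = x ∧ ω ∈ ({ω | ω a = v} ∩ S)) =
      if x = v then Finset.univ.filter (fun ω : ι → Bool => ω a = v ∧ ω ∈ S) else ∅ := by
    intro x
    split_ifs with h
    · subst h; ext ω; simp only [Finset.mem_filter, Finset.mem_univ, true_and,
        Set.mem_inter_iff, Set.mem_setOf_eq]; tauto
    · ext ω; simp only [Finset.mem_filter, Finset.mem_univ, true_and,
        Set.mem_inter_iff, Set.mem_setOf_eq, Finset.notMem_empty, iff_false]
      rintro ⟨h1, h2, _⟩; exact h (by rw [← h1, h2])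
  have key2 : π ({ω | ω a = v} ∩ S) = bern p {v} * T v := by
    rw [pi_split a ({ω | ω a = v} ∩ S), Fintype.sum_bool, hinner true, hinner false]
    cases v <;> simp [hT]
  rw [key2, key1]

end Cond

section Pairs

variable {ι : Type*} [Fintype ι] [DecidableEq ι] {p : ℝ}

local notation "π" => (Measure.pi fun _ : ι => bern p)

lemma meas_all (S : Set (ι → Bool)) : MeasurableSet S :=
  (Set.to_countable S).measurableSet

lemma pi_pair (hp0 : 0 ≤ p) (hp1 : p ≤ 1) (a b : ι) (hab : a ≠ b) (S : Set (ι → Bool))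
    (hSa : ∀ ω x, Function.update ω a x ∈ S ↔ ω ∈ S)
    (hSb : ∀ ω x, Function.update ω b x ∈ S ↔ ω ∈ S) :
    π ({ω | ¬(ω a = true ∧ ω b = true)} ∩ S) = ENNReal.ofReal (1 - p ^ 2) * π S := by
  have hsplit : {ω : ι → Bool | ¬(ω a = true ∧ ω b = true)} ∩ S =
      ({ω | ω a = false} ∩ S) ∪ ({ω | ω a = true} ∩ ({ω | ω b = false} ∩ S)) := by
    ext ω
    simp only [Set.mem_inter_iff, Set.mem_union, Set.mem_setOf_eq]
    cases h1 : ω a <;> cases h2 : ω b <;> simp <;> tauto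
  have hdisj : Disjoint ({ω : ι → Bool | ω a = false} ∩ S)
      ({ω | ω a = true} ∩ ({ω | ω b = false} ∩ S)) := by
    rw [Set.disjoint_left]
    rintro ω ⟨h1, -⟩ ⟨h2, -⟩
    simp only [Set.mem_setOf_eq] at h1 h2
    rw [h1] at h2; exact Bool.false_ne_true h2
  have hS' : ∀ ω x, Function.update ω a x ∈ ({ω : ι → Bool | ω b = false} ∩ S) ↔
      ω ∈ ({ω : ι → Bool | ω b = false} ∩ S) := by
    intro ω x
    simp only [Set.mem_inter_iff, Set.mem_setOf_eq, hSa ω x,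
      Function.update_of_ne (Ne.symm hab)]
  rw [hsplit, measure_union hdisj (meas_all _), pi_cond hp0 hp1 a false S hSa,
    pi_cond hp0 hp1 a true _ hS', pi_cond hp0 hp1 b false S hSb,
    bern_singleton, bern_singleton]
  simp only [if_true, if_false, Bool.false_eq_true]
  rw [← mul_assoc, ← ENNReal.ofReal_mul hp0, ← add_mul,
    ← ENNReal.ofReal_add (by linarith) (by nlinarith)]
  congr 2
  ring

lemma pi_pairs (hp0 : 0 ≤ p) (hp1 : p ≤ 1) :
    ∀ (t : ℕ) (f g : Fin t → ι), Function.Injective f → Function.Injective g →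
      (∀ j k, f j ≠ g k) →
      π {ω | ∀ j, ¬(ω (f j) = true ∧ ω (g j) = true)} =
        ENNReal.ofReal (1 - p ^ 2) ^ t := by
  intro t
  induction t with
  | zero =>
    intro f g _ _ _
    have hprob : IsProbabilityMeasure (bern p) := bern_isProb p hp0 hp1
    have : {ω : ι → Bool | ∀ j : Fin 0, ¬(ω (f j) = true ∧ ω (g j) = true)} = Set.univ := by
      ext ω; simp [Fin.elim0]
    rw [this, pow_zero]
    exact measure_univ
  | succ t ih =>
    intro f g hf hg hfg
    set S := {ω : ι → Bool | ∀ j : Fin t,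
      ¬(ω (f j.castSucc) = true ∧ ω (g j.castSucc) = true)} with hSdef
    have hset : {ω : ι → Bool | ∀ j, ¬(ω (f j) = true ∧ ω (g j) = true)} =
        {ω | ¬(ω (f (Fin.last t)) = true ∧ ω (g (Fin.last t)) = true)} ∩ S := by
      ext ω
      simp only [Set.mem_inter_iff, Set.mem_setOf_eq, hSdef]
      constructor
      · exact fun h => ⟨h _, fun j => h _⟩
      · rintro ⟨h1, h2⟩ j
        rcases Fin.eq_castSucc_or_eq_last j with ⟨j', rfl⟩ | rfl
        · exact h2 j'
        · exact h1
    have hinv : ∀ (c : ι), (∀ j : Fin t, f j.castSucc ≠ c) → (∀ j : Fin t, g j.castSucc ≠ c) →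
        ∀ ω x, Function.update ω c x ∈ S ↔ ω ∈ S := by
      intro c hfc hgc ω x
      simp only [hSdef, Set.mem_setOf_eq]
      refine forall_congr' fun j => ?_
      rw [Function.update_of_ne (hfc j), Function.update_of_ne (hgc j)]
    have hca : ∀ j : Fin t, j.castSucc ≠ Fin.last t := fun j => Fin.ne_last_of_lt j.castSucc_lt_last
    have hS2 : π S = ENNReal.ofReal (1 - p ^ 2) ^ t :=
      ih (f ∘ Fin.castSucc) (g ∘ Fin.castSucc)
        (hf.comp (Fin.castSucc_injective t)) (hg.comp (Fin.castSucc_injective t))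
        (fun j k => hfg _ _)
    rw [hset, pi_pair hp0 hp1 _ _ (hfg _ _) S
      (hinv _ (fun j h => hca j (hf h)) (fun j => Ne.symm (hfg _ _)))
      (hinv _ (fun j => hfg _ _) (fun j h => hca j (hg h))), hS2, pow_succ]
    ring

end Pairs

section EnBounds

variable {p : ℝ}

lemma En_bound_low (hp0 : 0 ≤ p) (hp1 : p ≤ 1) (N n : ℕ) (hn : n ≤ N) :
    prodBern p N {ω | ¬ inSumset ω n} ≤ ENNReal.ofReal (1 - p ^ 2) ^ ((n + 1) / 2) := by
  set t := (n + 1) / 2 with htdef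
  have ht : 2 * t ≤ n + 1 := by omega
  have hfb : ∀ j : Fin t, (j : ℕ) < N + 1 := fun j => by have := j.isLt; omega
  have hgb : ∀ j : Fin t, n - (j : ℕ) < N + 1 := fun j => by have := j.isLt; omega
  set f : Fin t → Fin (N + 1) := fun j => ⟨j, hfb j⟩ with hfdef
  set g : Fin t → Fin (N + 1) := fun j => ⟨n - j, hgb j⟩ with hgdef
  have hkey := pi_pairs (ι := Fin (N + 1)) hp0 hp1 t f g
    (fun j k h => by
      have := j.isLt; have := k.isLt
      have hv := congrArg Fin.val h
      exact Fin.ext (by omega))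
    (fun j k h => by
      have := j.isLt; have := k.isLt
      have hv := congrArg Fin.val h
      simp only [hgdef] at hv
      exact Fin.ext (by omega))
    (fun j k h => by
      have := j.isLt; have := k.isLt
      have hv := congrArg Fin.val h
      simp only [hfdef, hgdef] at hv
      omega)
  rw [show prodBern p N = Measure.pi fun _ : Fin (N + 1) => bern p from rfl, ← hkey]
  refine measure_mono fun ω hω j ⟨h1, h2⟩ => ?_
  refine hω ⟨f j, g j, h1, h2, ?_⟩
  have := j.isLt
  simp only [hfdef, hgdef]
  omega

lemma En_bound_high (hp0 : 0 ≤ p) (hp1 : p ≤ 1) (N n : ℕ) (hn1 : N + 1 ≤ n) (hn2 : n ≤ 2 * N) :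
    prodBern p N {ω | ¬ inSumset ω n} ≤
      ENNReal.ofReal (1 - p ^ 2) ^ ((2 * N - n + 1) / 2) := by
  set t := (2 * N - n + 1) / 2 with htdef
  have ht : 2 * t ≤ 2 * N - n + 1 := by omega
  have hfb : ∀ j : Fin t, n - N + (j : ℕ) < N + 1 := fun j => by have := j.isLt; omega
  have hgb : ∀ j : Fin t, N - (j : ℕ) < N + 1 := fun j => by have := j.isLt; omega
  set f : Fin t → Fin (N + 1) := fun j => ⟨n - N + j, hfb j⟩ with hfdef
  set g : Fin t → Fin (N + 1) := fun j => ⟨N - j, hgb j⟩ with hgdef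
  have hkey := pi_pairs (ι := Fin (N + 1)) hp0 hp1 t f g
    (fun j k h => by
      have := j.isLt; have := k.isLt
      have hv := congrArg Fin.val h
      simp only [hfdef] at hv
      exact Fin.ext (by omega))
    (fun j k h => by
      have := j.isLt; have := k.isLt
      have hv := congrArg Fin.val h
      simp only [hgdef] at hv
      exact Fin.ext (by omega))
    (fun j k h => by
      have := j.isLt; have := k.isLt
      have hv := congrArg Fin.val h
      simp only [hfdef, hgdef] at hv
      omega)
  rw [show prodBern p N = Measure.pi fun _ : Fin (N + 1) => bern p from rfl, ← hkey]
  refine measure_mono fun ω hω j ⟨h1, h2⟩ => ?_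
  refine hω ⟨f j, g j, h1, h2, ?_⟩
  have := j.isLt
  simp only [hfdef, hgdef]
  omega

lemma En_real (hp0 : 0 ≤ p) (hp1 : p ≤ 1) {N n t : ℕ}
    (h : prodBern p N {ω | ¬ inSumset ω n} ≤ ENNReal.ofReal (1 - p ^ 2) ^ t) :
    (prodBern p N {ω | ¬ inSumset ω n}).toReal ≤ (1 - p ^ 2) ^ t := by
  have hc : (0 : ℝ) ≤ 1 - p ^ 2 := by nlinarith
  have := ENNReal.toReal_mono (by
    exact ENNReal.pow_ne_top ENNReal.ofReal_ne_top) h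
  rwa [ENNReal.toReal_pow, ENNReal.toReal_ofReal hc] at this

end EnBounds

lemma sum_bound {p : ℝ} (hp0 : 0 < p) (hp1 : p < 1) (N : ℕ) (s : Finset ℕ) (φ : ℕ → ℕ)
    (t0 : ℕ) (hmap : ∀ n ∈ s, t0 ≤ φ n)
    (hfib : ∀ m : ℕ, (s.filter fun n => φ n = m).card ≤ 2)
    (hN : N ≤ 4 * t0) (F : ℕ → ℝ)
    (hF : ∀ n ∈ s, F n ≤ (1 - p ^ 2) ^ (φ n)) :
    ∑ n ∈ s, F n ≤ 2 / p ^ 2 * (1 - p ^ 2) ^ ((N : ℝ) / 4) := by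
  classical
  set q : ℝ := 1 - p ^ 2 with hq
  have hq0 : 0 < q := by nlinarith
  have hq1 : q < 1 := by nlinarith
  have hrpow_pos : 0 < q ^ ((N : ℝ) / 4) := Real.rpow_pos_of_pos hq0 _
  have hRHS : 0 ≤ 2 / p ^ 2 * q ^ ((N : ℝ) / 4) := by positivity
  rcases s.eq_empty_or_nonempty with rfl | hs
  · simpa using hRHS
  set B := s.sup φ with hB
  have ht0B : t0 ≤ B := le_trans (hmap hs.choose hs.choose_spec)
    (Finset.le_sup hs.choose_spec)
  calc ∑ n ∈ s, F n ≤ ∑ n ∈ s, q ^ (φ n) := Finset.sum_le_sum hF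
    _ = ∑ m ∈ s.image φ, ∑ n ∈ s.filter fun n => φ n = m, q ^ (φ n) :=
        (Finset.sum_fiberwise_of_maps_to (fun n hn => Finset.mem_image_of_mem φ hn) _).symm
    _ ≤ ∑ m ∈ s.image φ, 2 * q ^ m := by
        refine Finset.sum_le_sum fun m _ => ?_
        have : ∑ n ∈ s.filter (fun n => φ n = m), q ^ (φ n)
            = (s.filter fun n => φ n = m).card * q ^ m := by
          rw [Finset.sum_congr rfl fun n hn => by
            rw [(Finset.mem_filter.1 hn).2], Finset.sum_const, nsmul_eq_mul]
        rw [this]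
        have := hfib m
        have hqm : (0:ℝ) ≤ q ^ m := le_of_lt (pow_pos hq0 m)
        calc ((s.filter fun n => φ n = m).card : ℝ) * q ^ m ≤ 2 * q ^ m := by
              apply mul_le_mul_of_nonneg_right _ hqm
              exact_mod_cast this
          _ = 2 * q ^ m := rfl
    _ ≤ ∑ m ∈ Finset.Icc t0 B, 2 * q ^ m := by
        refine Finset.sum_le_sum_of_subset_of_nonneg ?_ fun m _ _ => by positivity
        intro m hm
        rcases Finset.mem_image.1 hm with ⟨n, hn, rfl⟩
        exact Finset.mem_Icc.2 ⟨hmap n hn, Finset.le_sup hn⟩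
    _ = 2 * ∑ m ∈ Finset.Icc t0 B, q ^ m := by rw [Finset.mul_sum]
    _ ≤ 2 * (q ^ t0 / p ^ 2) := by
        have hIcc : Finset.Icc t0 B = Finset.Ico t0 (B + 1) := by
          rw [Finset.Ico_add_one_right_eq_Icc]
        rw [hIcc, geom_sum_Ico (ne_of_lt hq1) (by omega)]
        have h1 : (q ^ (B+1) - q ^ t0) / (q - 1) = (q ^ t0 - q ^ (B+1)) / (1 - q) := by
          rw [← neg_div_neg_eq]; ring_nf
        rw [h1]
        have h2 : 1 - q = p ^ 2 := by rw [hq]; ring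
        rw [h2]
        have h3 : 0 < q ^ (B+1) := pow_pos hq0 _
        have hp2 : (0:ℝ) < p ^ 2 := by positivity
        have h4 := (div_le_div_iff_of_pos_right hp2).mpr (by linarith : q ^ t0 - q ^ (B+1) ≤ q ^ t0)
        linarith
    _ = 2 / p ^ 2 * q ^ t0 := by ring
    _ ≤ 2 / p ^ 2 * q ^ ((N : ℝ) / 4) := by
        have hnat : q ^ t0 = q ^ ((t0 : ℕ) : ℝ) := (Real.rpow_natCast q t0).symm
        rw [hnat]
        have hexp : (N : ℝ) / 4 ≤ (t0 : ℕ) := by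
          have : (N : ℝ) ≤ 4 * (t0 : ℕ) := by exact_mod_cast hN
          linarith
        have := Real.rpow_le_rpow_of_exponent_ge hq0 (le_of_lt hq1) hexp
        have hpos : 0 < 2 / p ^ 2 := by positivity
        nlinarith [Real.rpow_pos_of_pos hq0 ((N : ℝ) / 4)]

noncomputable def indE (N n : ℕ) : (Fin (N + 1) → Bool) → ℝ :=
  Set.indicator {ω' : Fin (N + 1) → Bool | ¬ inSumset ω' n} (fun _ => (1 : ℝ))

lemma ncard_eq_sum (N : ℕ) (s : Finset ℕ) (ω : Fin (N + 1) → Bool) :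
    ({n : ℕ | n ∈ s ∧ ¬ inSumset ω n}.ncard : ℝ) = ∑ n ∈ s, indE N n ω := by
  classical
  have h1 : {n : ℕ | n ∈ s ∧ ¬ inSumset ω n} =
      ↑(s.filter fun n => ¬ inSumset ω n) := by ext n; simp
  rw [h1, Set.ncard_coe_finset]
  simp only [indE, Set.indicator_apply, Set.mem_setOf_eq]
  rw [Finset.sum_boole]

lemma Y_diff (N : ℕ) (ω : Fin (N + 1) → Bool) :
    (Ycount N ω : ℝ) - (Ytilde N ω : ℝ) =
      ∑ n ∈ Finset.Ioc (N / 2) N, indE N n ω := by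
  have hY : (Ycount N ω : ℝ) = ∑ n ∈ Finset.range (N + 1), indE N n ω := by
    rw [show Ycount N ω = {n : ℕ | n ∈ Finset.range (N + 1) ∧ ¬ inSumset ω n}.ncard from by
      unfold Ycount; congr 1; ext n; simp [Nat.lt_succ_iff]]
    exact ncard_eq_sum N _ ω
  have hY2 : (Ytilde N ω : ℝ) = ∑ n ∈ Finset.range (N / 2 + 1), indE N n ω := by
    rw [show Ytilde N ω = {n : ℕ | n ∈ Finset.range (N / 2 + 1) ∧ ¬ inSumset ω n}.ncard from by
      unfold Ytilde; congr 1; ext n; simp [Nat.lt_succ_iff]]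
    exact ncard_eq_sum N _ ω
  have hsplit : Finset.range (N + 1) = Finset.range (N / 2 + 1) ∪ Finset.Ioc (N / 2) N := by
    ext n; simp only [Finset.mem_union, Finset.mem_range, Finset.mem_Ioc]; omega
  have hdisj : Disjoint (Finset.range (N / 2 + 1)) (Finset.Ioc (N / 2) N) := by
    simp only [Finset.disjoint_left, Finset.mem_range, Finset.mem_Ioc]; omega
  rw [hY, hY2, hsplit, Finset.sum_union hdisj]
  ring

lemma Z_diff (N : ℕ) (ω : Fin (N + 1) → Bool) :
    (Zcount N ω : ℝ) - (Ztilde N ω : ℝ) =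
      ∑ n ∈ Finset.Ioc N (3 * N / 2), indE N n ω := by
  have hZ : (Zcount N ω : ℝ) = ∑ n ∈ Finset.Ioc N (2 * N), indE N n ω := by
    rw [show Zcount N ω = {n : ℕ | n ∈ Finset.Ioc N (2 * N) ∧ ¬ inSumset ω n}.ncard from by
      unfold Zcount; congr 1; ext n
      simp only [Set.mem_setOf_eq, Finset.mem_Ioc, Nat.lt_iff_add_one_le, and_assoc]]
    exact ncard_eq_sum N _ ω
  have hZ2 : (Ztilde N ω : ℝ) = ∑ n ∈ Finset.Ioc (3 * N / 2) (2 * N), indE N n ω := by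
    rw [show Ztilde N ω = {n : ℕ | n ∈ Finset.Ioc (3 * N / 2) (2 * N) ∧ ¬ inSumset ω n}.ncard
      from by
      unfold Ztilde; congr 1; ext n
      simp only [Set.mem_setOf_eq, Finset.mem_Ioc, Nat.lt_iff_add_one_le, and_assoc]]
    exact ncard_eq_sum N _ ω
  have hsplit : Finset.Ioc N (2 * N) =
      Finset.Ioc N (3 * N / 2) ∪ Finset.Ioc (3 * N / 2) (2 * N) := by
    ext n; simp only [Finset.mem_union, Finset.mem_Ioc]; omega
  have hdisj : Disjoint (Finset.Ioc N (3 * N / 2)) (Finset.Ioc (3 * N / 2) (2 * N)) := by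
    simp only [Finset.disjoint_left, Finset.mem_Ioc]; omega
  rw [hZ, hZ2, hsplit, Finset.sum_union hdisj]
  ring

lemma integral_sum_ind {p : ℝ} (hp0 : 0 ≤ p) (hp1 : p ≤ 1) (N : ℕ) (s : Finset ℕ) :
    ∫ ω, (∑ n ∈ s, indE N n ω) ∂ prodBern p N =
      ∑ n ∈ s, (prodBern p N {ω | ¬ inSumset ω n}).toReal := by
  haveI : IsProbabilityMeasure (prodBern p N) := by
    haveI := bern_isProb p hp0 hp1
    unfold prodBern
    infer_instance
  rw [integral_finset_sum _ (fun n _ => Integrable.of_finite)]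
  exact Finset.sum_congr rfl fun n _ => integral_indicator_one (meas_all _)

/-- The expectations `E[Y - Ỹ]` and `E[Z - Z̃]` are bounded above by
`(2/p²)(1-p²)^(N/4)` and below by `0`. -/
theorem stmt3 (p : ℝ) (hp0 : 0 < p) (hp1 : p < 1) (N : ℕ) :
    (0 ≤ (∫ ω, ((Ycount N ω : ℝ) - (Ytilde N ω : ℝ)) ∂ prodBern p N) ∧
      (∫ ω, ((Ycount N ω : ℝ) - (Ytilde N ω : ℝ)) ∂ prodBern p N) ≤
        2 / p ^ 2 * (1 - p ^ 2) ^ ((N : ℝ) / 4)) ∧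
    (0 ≤ (∫ ω, ((Zcount N ω : ℝ) - (Ztilde N ω : ℝ)) ∂ prodBern p N) ∧
      (∫ ω, ((Zcount N ω : ℝ) - (Ztilde N ω : ℝ)) ∂ prodBern p N) ≤
        2 / p ^ 2 * (1 - p ^ 2) ^ ((N : ℝ) / 4)) := by
  have e1 : (∫ ω, ((Ycount N ω : ℝ) - (Ytilde N ω : ℝ)) ∂ prodBern p N)
      = ∑ n ∈ Finset.Ioc (N / 2) N, (prodBern p N {ω | ¬ inSumset ω n}).toReal := by
    simp_rw [Y_diff N]
    exact integral_sum_ind hp0.le hp1.le N _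
  have e2 : (∫ ω, ((Zcount N ω : ℝ) - (Ztilde N ω : ℝ)) ∂ prodBern p N)
      = ∑ n ∈ Finset.Ioc N (3 * N / 2), (prodBern p N {ω | ¬ inSumset ω n}).toReal := by
    simp_rw [Z_diff N]
    exact integral_sum_ind hp0.le hp1.le N _
  refine ⟨⟨?_, ?_⟩, ?_, ?_⟩
  · rw [e1]; exact Finset.sum_nonneg fun n _ => ENNReal.toReal_nonneg
  · rw [e1]
    refine sum_bound hp0 hp1 N _ (fun n => (n + 1) / 2) ((N / 2 + 2) / 2) ?_ ?_ (by omega) _ ?_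
    · intro n hn; rw [Finset.mem_Ioc] at hn; omega
    · intro m
      have hsub : (Finset.Ioc (N / 2) N).filter (fun n => (n + 1) / 2 = m) ⊆
          {2 * m - 1, 2 * m} := by
        intro n hn
        simp only [Finset.mem_filter, Finset.mem_Ioc, Finset.mem_insert,
          Finset.mem_singleton] at hn ⊢
        omega
      exact le_trans (Finset.card_le_card hsub) (le_trans (Finset.card_insert_le _ _) (by simp))
    · intro n hn
      rw [Finset.mem_Ioc] at hn
      exact En_real hp0.le hp1.le (En_bound_low hp0.le hp1.le N n hn.2)
  · rw [e2]; exact Finset.sum_nonneg fun n _ => ENNReal.toReal_nonneg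
  · rw [e2]
    refine sum_bound hp0 hp1 N _ (fun n => (2 * N - n + 1) / 2) ((2 * N - 3 * N / 2 + 1) / 2)
      ?_ ?_ (by omega) _ ?_
    · intro n hn; rw [Finset.mem_Ioc] at hn; omega
    · intro m
      have hsub : (Finset.Ioc N (3 * N / 2)).filter (fun n => (2 * N - n + 1) / 2 = m) ⊆
          {2 * N - 2 * m, 2 * N + 1 - 2 * m} := by
        intro n hn
        simp only [Finset.mem_filter, Finset.mem_Ioc, Finset.mem_insert,
          Finset.mem_singleton] at hn ⊢
        omega
      exact le_trans (Finset.card_le_card hsub) (le_trans (Finset.card_insert_le _ _) (by simp))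
    · intro n hn
      rw [Finset.mem_Ioc] at hn
      exact En_real hp0.le hp1.le (En_bound_high hp0.le hp1.le N n (by omega) (by omega))
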